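/- Let λ ∈ P⁺ be a dominant weight and α ∈ R⁺ a positive root. If ℓ and ℓ′ are integers with 1 ≤ ℓ, ℓ′ ≤ ⌊⟨λ,α∨⟩/2⌋ and λ − ℓ′α lies in the Weyl orbit W(λ − ℓα), then ℓ′ = ℓ. In other words, the α-string λ−α, λ−2α, …, λ−⌊⟨λ,α∨⟩/2⌋α meets each Weyl orbit at most once. -/
import Mathlib


open scoped RealInnerProductSpace

noncomputable section

variable {E : Type*} [NormedAddCommGroup E] [InnerProductSpace ℝ E]

/-- The coroot pairing `⟨x, α∨⟩ = 2⟨x,α⟩/⟨α,α⟩`. -/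
def copair (α x : E) : ℝ := 2 * ⟪x, α⟫ / ⟪α, α⟫

/-- The orthogonal reflection `r_α(x) = x - ⟨x,α∨⟩α`. -/
def reflRoot (α x : E) : E := x - copair α x • α

/-- The set of reflections in the roots of `R`, as linear automorphisms. -/
def reflections (R : Finset E) : Set (E ≃ₗ[ℝ] E) :=
  {g | ∃ α ∈ R, ∀ x, g x = reflRoot α x}

/-- The Weyl group of `R`. -/
def weylGroup (R : Finset E) : Subgroup (E ≃ₗ[ℝ] E) :=
  Subgroup.closure (reflections R)

/-- Membership in the weight lattice `P`. -/
def IsWeight (R : Finset E) (x : E) : Prop :=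
  ∀ α ∈ R, ∃ z : ℤ, copair α x = (z : ℝ)

/-- Dominance: nonnegative pairing with all positive coroots. -/
def IsDominant (Rp : Finset E) (x : E) : Prop :=
  ∀ α ∈ Rp, 0 ≤ copair α x

/-- **The α-string below a dominant weight meets each Weyl orbit at most
once.**  If `λ ∈ P⁺`, `α ∈ R⁺` and `1 ≤ ℓ, ℓ' ≤ ⌊⟨λ,α∨⟩/2⌋` are such that
`λ - ℓ'α ∈ W(λ - ℓα)`, then `ℓ' = ℓ`. -/

lemma refl_inner_self (α : E) (hα : α ≠ 0) (x : E) :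
    ⟪reflRoot α x, reflRoot α x⟫ = ⟪x, x⟫ := by
  have hs : ⟪α, α⟫ ≠ 0 := fun h => hα (inner_self_eq_zero.mp h)
  simp only [reflRoot, copair, inner_sub_left, inner_sub_right,
    real_inner_smul_left, real_inner_smul_right, real_inner_comm x α]
  field_simp
  ring

lemma weyl_inner_self (R : Finset E) (h0 : (0 : E) ∉ R) :
    ∀ w ∈ weylGroup R, ∀ x : E, ⟪(w : E ≃ₗ[ℝ] E) x, (w : E ≃ₗ[ℝ] E) x⟫ = ⟪x, x⟫ := by
  intro w hw
  induction hw using Subgroup.closure_induction with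
  | mem g hg =>
    obtain ⟨β, hβ, hgx⟩ := hg
    intro x
    rw [hgx]
    exact refl_inner_self β (fun h => h0 (h ▸ hβ)) x
  | one => intro x; simp
  | mul g g' _ _ hg hg' =>
    intro x
    have : ((g * g' : E ≃ₗ[ℝ] E)) x = g (g' x) := rfl
    rw [this, hg, hg']
  | inv g _ hg =>
    intro x
    have h := hg ((g⁻¹ : E ≃ₗ[ℝ] E) x)
    have h2 : (g : E ≃ₗ[ℝ] E) ((g⁻¹ : E ≃ₗ[ℝ] E) x) = x :=
      g.apply_symm_apply x
    rw [h2] at h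
    exact h.symm

theorem alpha_string_meets_orbit_once
    (R Rp : Finset E)
    (h0 : (0 : E) ∉ R)
    (hspan : Submodule.span ℝ (R : Set E) = ⊤)
    (hcrys : ∀ α ∈ R, ∀ β ∈ R, ∃ z : ℤ, copair α β = (z : ℝ))
    (hrc : ∀ α ∈ R, ∀ β ∈ R, reflRoot α β ∈ R)
    (f : E →ₗ[ℝ] ℝ) (hf : ∀ α ∈ R, f α ≠ 0)
    (hRp : ∀ α, α ∈ Rp ↔ α ∈ R ∧ 0 < f α)
    (lam : E) (hlamP : IsWeight R lam) (hlamD : IsDominant Rp lam)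
    (α : E) (hα : α ∈ Rp)
    (ℓ ℓ' : ℕ)
    (hℓ1 : 1 ≤ ℓ) (hℓ2 : ℓ ≤ (⌊copair α lam / 2⌋).toNat)
    (hℓ'1 : 1 ≤ ℓ') (hℓ'2 : ℓ' ≤ (⌊copair α lam / 2⌋).toNat)
    (horb : ∃ w ∈ weylGroup R,
      (w : E ≃ₗ[ℝ] E) (lam - (ℓ : ℝ) • α) = lam - (ℓ' : ℝ) • α) :
    ℓ' = ℓ := by
  by_contra hne
  obtain ⟨w, hw, heq⟩ := horb
  have hαR : α ∈ R := ((hRp α).mp hα).1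
  have hα0 : α ≠ 0 := fun h => h0 (h ▸ hαR)
  have hs0 : ⟪α, α⟫ ≠ 0 := fun h => hα0 (inner_self_eq_zero.mp h)
  have hs : (0:ℝ) < ⟪α, α⟫ := lt_of_le_of_ne real_inner_self_nonneg (Ne.symm hs0)
  have hnorm := weyl_inner_self R h0 w hw (lam - (ℓ : ℝ) • α)
  rw [heq] at hnorm
  set b : ℝ := ⟪lam, α⟫ with hb
  set s : ℝ := ⟪α, α⟫ with hsdef
  have expand : ∀ n : ℝ, ⟪lam - n • α, lam - n • α⟫
      = ⟪lam, lam⟫ - 2 * n * b + n ^ 2 * s := by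
    intro n
    simp only [inner_sub_left, inner_sub_right, real_inner_smul_left,
      real_inner_smul_right, real_inner_comm α lam, hb, hsdef]
    ring
  rw [expand, expand] at hnorm
  have hℓne : ((ℓ' : ℝ) - ℓ) ≠ 0 := by
    intro h
    exact hne (Nat.cast_injective (by linarith : ((ℓ' : ℝ)) = (ℓ : ℝ)))
  have hkey : 2 * b = ((ℓ : ℝ) + ℓ') * s := by
    have hdiff : ((ℓ' : ℝ) - ℓ) * (2 * b - ((ℓ : ℝ) + ℓ') * s) = 0 := by
      nlinarith [hnorm]
    rcases mul_eq_zero.mp hdiff with h | h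
    · exact absurd h hℓne
    · linarith
  have hc : copair α lam = (ℓ : ℝ) + ℓ' := by
    rw [copair, ← hb, ← hsdef, div_eq_iff (ne_of_gt hs)]
    linarith
  have hfloor : ∀ n : ℕ, 1 ≤ n → n ≤ (⌊copair α lam / 2⌋).toNat →
      (n : ℝ) ≤ copair α lam / 2 := by
    intro n hn1 hn
    have h1 : (n : ℤ) ≤ ⌊copair α lam / 2⌋ := by omega
    exact_mod_cast Int.le_floor.mp h1
  have h1 := hfloor ℓ hℓ1 hℓ2
  have h2 := hfloor ℓ' hℓ'1 hℓ'2
  rw [hc] at h1 h2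
  have : (ℓ' : ℝ) = (ℓ : ℝ) := by linarith
  exact hne (Nat.cast_injective this)
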